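/- arXiv:2203.16146 — 3 statements merged into one kernel-verified Lean document; each statement's English description precedes it below -/
import Mathlib

section
/- Let n ≥ 2 be an integer, h a real constant, and I ⊆ ℝ an open interval. Let f, b : ℝ → ℝ be three times differentiable on I with b(t) > 0 and f(t) ≠ 0 for all t ∈ I. If f''(t) + (n−1)(b''(t)/b(t)) f(t) + h = 0 and f(t) b''(t) − f'(t) b'(t) = h b(t) for all t ∈ I, then b(t) b'''(t) + (n−1) b'(t) b''(t) = 0 for all t ∈ I; consequently the function t ↦ b(t)^{n−1} b''(t) is constant on I. -/
/-- Lemma 5.3: the ODE system `f'' + (n−1)(b''/b) f + h = 0` and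
`f b'' − f' b' = h b` forces `b b''' + (n−1) b' b'' = 0`, hence
`b^{n−1} b''` is constant on the interval. -/
theorem stmt_7 (n : ℕ) (hn : 2 ≤ n) (h : ℝ) (I : Set ℝ)
    (hIopen : IsOpen I) (hIinterval : I.OrdConnected)
    (f b : ℝ → ℝ)
    (hf : ∀ t ∈ I, DifferentiableAt ℝ f t)
    (hf' : ∀ t ∈ I, DifferentiableAt ℝ (deriv f) t)
    (hb : ∀ t ∈ I, DifferentiableAt ℝ b t)
    (hb' : ∀ t ∈ I, DifferentiableAt ℝ (deriv b) t)
    (hb'' : ∀ t ∈ I, DifferentiableAt ℝ (deriv (deriv b)) t)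
    (hbpos : ∀ t ∈ I, 0 < b t)
    (hfne : ∀ t ∈ I, f t ≠ 0)
    (heq1 : ∀ t ∈ I,
      deriv (deriv f) t + ((n : ℝ) - 1) * (deriv (deriv b) t / b t) * f t + h = 0)
    (heq2 : ∀ t ∈ I,
      f t * deriv (deriv b) t - deriv f t * deriv b t = h * b t) :
    (∀ t ∈ I,
      b t * deriv (deriv (deriv b)) t + ((n : ℝ) - 1) * deriv b t * deriv (deriv b) t = 0) ∧
    ∀ t ∈ I, ∀ t' ∈ I,
      b t ^ (n - 1) * deriv (deriv b) t = b t' ^ (n - 1) * deriv (deriv b) t' := by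
  have key : ∀ t ∈ I,
      b t * deriv (deriv (deriv b)) t + ((n : ℝ) - 1) * deriv b t * deriv (deriv b) t = 0 := by
    intro t ht
    -- differentiate heq2 at t
    have hmem : I ∈ nhds t := hIopen.mem_nhds ht
    have hEq : (fun s => f s * deriv (deriv b) s - deriv f s * deriv b s)
        =ᶠ[nhds t] (fun s => h * b s) := by
      filter_upwards [hmem] with s hs using heq2 s hs
    have hD : HasDerivAt (fun s => f s * deriv (deriv b) s - deriv f s * deriv b s)
        (deriv f t * deriv (deriv b) t + f t * deriv (deriv (deriv b)) t
          - (deriv (deriv f) t * deriv b t + deriv f t * deriv (deriv b) t)) t :=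
      (((hf t ht).hasDerivAt.mul (hb'' t ht).hasDerivAt).sub
        ((hf' t ht).hasDerivAt.mul (hb' t ht).hasDerivAt))
    have hD2 : HasDerivAt (fun s => h * b s) (h * deriv b t) t :=
      (hb t ht).hasDerivAt.const_mul h
    have hderiv : deriv f t * deriv (deriv b) t + f t * deriv (deriv (deriv b)) t
        - (deriv (deriv f) t * deriv b t + deriv f t * deriv (deriv b) t)
        = h * deriv b t := by
      have := (hD.congr_of_eventuallyEq hEq.symm)
      exact hD2.unique this ▸ rfl
    have hbne : b t ≠ 0 := (hbpos t ht).ne'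
    have h1 := heq1 t ht
    have hfne' := hfne t ht
    -- from hderiv: f b''' - f'' b' = h b'
    have h2 : f t * deriv (deriv (deriv b)) t - deriv (deriv f) t * deriv b t
        = h * deriv b t := by linarith [hderiv]
    -- f'' = -h - (n-1) (b''/b) f
    have h3 : deriv (deriv f) t = -h - ((n : ℝ) - 1) * (deriv (deriv b) t / b t) * f t := by
      linarith [h1]
    rw [h3] at h2
    have h4 : f t * (b t * deriv (deriv (deriv b)) t
        + ((n : ℝ) - 1) * deriv b t * deriv (deriv b) t) = 0 := by
      field_simp at h2 ⊢
      ring_nf at h2 ⊢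
      linarith [h2]
    rcases mul_eq_zero.mp h4 with h5 | h5
    · exact absurd h5 hfne'
    · exact h5
  refine ⟨key, ?_⟩
  intro t ht t' ht'
  set g : ℝ → ℝ := fun s => b s ^ (n - 1) * deriv (deriv b) s with hg
  have hcast : ((n - 1 : ℕ) : ℝ) = (n : ℝ) - 1 := by
    have : 1 ≤ n := le_trans (by norm_num) hn
    push_cast [Nat.cast_sub this]
    ring
  have hgderiv : ∀ s ∈ I, HasDerivAt g 0 s := by
    intro s hs
    have hD : HasDerivAt g
        ((↑(n - 1) * b s ^ (n - 1 - 1) * deriv b s) * deriv (deriv b) s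
          + b s ^ (n - 1) * deriv (deriv (deriv b)) s) s :=
      (((hb s hs).hasDerivAt.pow (n - 1)).mul (hb'' s hs).hasDerivAt)
    have hz : (↑(n - 1) * b s ^ (n - 1 - 1) * deriv b s) * deriv (deriv b) s
        + b s ^ (n - 1) * deriv (deriv (deriv b)) s = 0 := by
      have hk := key s hs
      have hpow : b s ^ (n - 1) = b s ^ (n - 1 - 1) * b s := by
        rw [← pow_succ]
        congr 1
        omega
      rw [hcast, hpow]
      nlinarith [hk, pow_pos (hbpos s hs) (n - 1 - 1)]
    rwa [hz] at hD
  have hconv : Convex ℝ I := convex_iff_ordConnected.mpr hIinterval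
  have hdiff : DifferentiableOn ℝ g I := fun s hs =>
    ((hgderiv s hs).differentiableAt).differentiableWithinAt
  have hfd : ∀ s ∈ I, fderivWithin ℝ g I s = 0 := by
    intro s hs
    have : fderivWithin ℝ g I s = fderiv ℝ g s :=
      fderivWithin_of_isOpen hIopen hs
    rw [this, ((hgderiv s hs).hasFDerivAt).fderiv]
    ext
    simp
  exact hconv.is_const_of_fderivWithin_eq_zero hdiff hfd ht ht'
end

section
/- Let n ≥ 2 be an integer, h a real constant, and I ⊆ ℝ an open interval. Let f, b : ℝ → ℝ be sufficiently differentiable (f twice, b three times) on I with b(t) > 0 and f(t) > 0 for all t ∈ I. Assume f''(t) + (n−1)(b''(t)/b(t)) f(t) + h = 0 and f(t) b''(t) − f'(t) b'(t) = h b(t) on I. Define α(t) := −(n−1) b''(t)/b(t). Then for all t ∈ I: f'(t) · α'(t) = n α(t) · ( f(t) α(t)/(n−1) + h ). -/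
/-- Warped-product form of equation (eqn2022-2-12-2) of Lemma 5.1:
with `α = −(n−1) b''/b`, the ODE system yields
`f' α' = n α (f α/(n−1) + h)`. -/
theorem stmt_8 (n : ℕ) (hn : 2 ≤ n) (h : ℝ) (I : Set ℝ)
    (hIopen : IsOpen I) (hIinterval : I.OrdConnected)
    (f b : ℝ → ℝ)
    (hf : ∀ t ∈ I, DifferentiableAt ℝ f t)
    (hf' : ∀ t ∈ I, DifferentiableAt ℝ (deriv f) t)
    (hb : ∀ t ∈ I, DifferentiableAt ℝ b t)
    (hb' : ∀ t ∈ I, DifferentiableAt ℝ (deriv b) t)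
    (hb'' : ∀ t ∈ I, DifferentiableAt ℝ (deriv (deriv b)) t)
    (hbpos : ∀ t ∈ I, 0 < b t)
    (hfpos : ∀ t ∈ I, 0 < f t)
    (heq1 : ∀ t ∈ I,
      deriv (deriv f) t + ((n : ℝ) - 1) * (deriv (deriv b) t / b t) * f t + h = 0)
    (heq2 : ∀ t ∈ I,
      f t * deriv (deriv b) t - deriv f t * deriv b t = h * b t)
    (α : ℝ → ℝ)
    (hα : α = fun t => -(((n : ℝ) - 1)) * (deriv (deriv b) t / b t)) :
    ∀ t ∈ I,
      deriv f t * deriv α t =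
        (n : ℝ) * α t * (f t * α t / ((n : ℝ) - 1) + h) := by
  intro t ht
  have hBne : b t ≠ 0 := (hbpos t ht).ne'
  have hFne : f t ≠ 0 := (hfpos t ht).ne'
  have hc : ((n : ℝ) - 1) ≠ 0 := by
    have : (2 : ℝ) ≤ (n : ℝ) := by exact_mod_cast hn
    linarith
  -- derivative of α at t
  have hdα : HasDerivAt α
      (-(((n : ℝ) - 1)) * ((deriv (deriv (deriv b)) t * b t
        - deriv (deriv b) t * deriv b t) / (b t) ^ 2)) t := by
    rw [hα]
    exact (((hb'' t ht).hasDerivAt.div (hb t ht).hasDerivAt hBne)).const_mul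
      (-(((n : ℝ) - 1)))
  -- differentiate heq2
  have hev : (fun s => f s * deriv (deriv b) s - deriv f s * deriv b s)
      =ᶠ[nhds t] fun s => h * b s := by
    filter_upwards [hIopen.mem_nhds ht] with s hs
    exact heq2 s hs
  have h1 : HasDerivAt (fun s => f s * deriv (deriv b) s - deriv f s * deriv b s)
      (deriv f t * deriv (deriv b) t + f t * deriv (deriv (deriv b)) t
        - (deriv (deriv f) t * deriv b t + deriv f t * deriv (deriv b) t)) t :=
    ((hf t ht).hasDerivAt.mul (hb'' t ht).hasDerivAt).sub
      ((hf' t ht).hasDerivAt.mul (hb' t ht).hasDerivAt)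
  have h2 : HasDerivAt (fun s => h * b s) (h * deriv b t) t :=
    (hb t ht).hasDerivAt.const_mul h
  have hE3 : deriv f t * deriv (deriv b) t + f t * deriv (deriv (deriv b)) t
      - (deriv (deriv f) t * deriv b t + deriv f t * deriv (deriv b) t)
      = h * deriv b t := by
    rw [← h1.deriv, ← h2.deriv]
    exact hev.deriv_eq
  have hE1 := heq1 t ht
  have hE2 := heq2 t ht
  have hE1' : deriv (deriv f) t * b t + ((n : ℝ) - 1) * deriv (deriv b) t * f t
      + h * b t = 0 := by
    field_simp at hE1
    linarith
  set F := f t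
  set F1 := deriv f t
  set F2 := deriv (deriv f) t
  set B := b t
  set B1 := deriv b t
  set B2 := deriv (deriv b) t
  set B3 := deriv (deriv (deriv b)) t
  have L : F * B ^ 2 * (F1 * deriv α t)
      = -(((n : ℝ) - 1)) * F * F1 * (B3 * B - B2 * B1) := by
    rw [hdα.deriv]
    field_simp
  have R : F * B ^ 2 * ((n : ℝ) * α t * (F * α t / ((n : ℝ) - 1) + h))
      = (n : ℝ) * ((n : ℝ) - 1) * F * B2 * (F * B2 - h * B) := by
    rw [hα]
    simp only
    change F * B ^ 2 * ((n : ℝ) * (-(((n : ℝ) - 1)) * (B2 / B)) * (F * (-(((n : ℝ) - 1)) * (B2 / B)) / ((n : ℝ) - 1) + h)) = _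
    field_simp
    ring
  have key : -(((n : ℝ) - 1)) * F * F1 * (B3 * B - B2 * B1)
      = (n : ℝ) * ((n : ℝ) - 1) * F * B2 * (F * B2 - h * B) := by
    linear_combination (-(((n : ℝ) - 1)) * F1 * B) * hE3
      + (-(((n : ℝ) - 1)) * F1 * B1) * hE1'
      + (-(((n : ℝ) - 1)) * (n : ℝ) * F * B2) * hE2
  have hFB : F * B ^ 2 ≠ 0 := mul_ne_zero hFne (pow_ne_zero 2 hBne)
  exact mul_left_cancel₀ hFB (by rw [L, R, key])
end

section
/- Let n ≥ 2 be an integer, h a real constant, and I ⊆ ℝ an open interval. Let f, b : ℝ → ℝ be sufficiently differentiable (f twice, b three times, α := −(n−1) b''/b twice differentiable) on I with b(t) > 0 and f(t) > 0 for all t ∈ I. Assume f''(t) + (n−1)(b''(t)/b(t)) f(t) + h = 0 and f(t) b''(t) − f'(t) b'(t) = h b(t) on I. If t₁ ∈ I satisfies f'(t₁) ≠ 0 and f(t₁) α(t₁) + (n−1) h = 0, then α'(t₁) = 0 and α''(t₁) = n α(t₁)² / (n−1). -/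
/-- One-dimensional form of Lemma 5.6(1) with (eqn2022-2-20-5):
at a point where `f α + (n−1) h = 0` and `f' ≠ 0`, one has `α' = 0` and
`α'' = n α²/(n−1)`, where `α = −(n−1) b''/b`. -/
theorem stmt_9 (n : ℕ) (hn : 2 ≤ n) (h : ℝ) (I : Set ℝ)
    (hIopen : IsOpen I) (hIinterval : I.OrdConnected)
    (f b : ℝ → ℝ)
    (hf : ∀ t ∈ I, DifferentiableAt ℝ f t)
    (hf' : ∀ t ∈ I, DifferentiableAt ℝ (deriv f) t)
    (hb : ∀ t ∈ I, DifferentiableAt ℝ b t)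
    (hb' : ∀ t ∈ I, DifferentiableAt ℝ (deriv b) t)
    (hb'' : ∀ t ∈ I, DifferentiableAt ℝ (deriv (deriv b)) t)
    (hbpos : ∀ t ∈ I, 0 < b t)
    (hfpos : ∀ t ∈ I, 0 < f t)
    (heq1 : ∀ t ∈ I,
      deriv (deriv f) t + ((n : ℝ) - 1) * (deriv (deriv b) t / b t) * f t + h = 0)
    (heq2 : ∀ t ∈ I,
      f t * deriv (deriv b) t - deriv f t * deriv b t = h * b t)
    (α : ℝ → ℝ)
    (hα : α = fun t => -(((n : ℝ) - 1)) * (deriv (deriv b) t / b t))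
    (hαdiff : ∀ t ∈ I, DifferentiableAt ℝ α t)
    (hαdiff' : ∀ t ∈ I, DifferentiableAt ℝ (deriv α) t)
    (t₁ : ℝ) (ht₁ : t₁ ∈ I)
    (hcrit : deriv f t₁ ≠ 0)
    (hval : f t₁ * α t₁ + ((n : ℝ) - 1) * h = 0) :
    deriv α t₁ = 0 ∧
      deriv (deriv α) t₁ = (n : ℝ) * (α t₁) ^ 2 / ((n : ℝ) - 1) := by
  set k : ℝ := (n : ℝ) - 1 with hk
  have hn2 : (2:ℝ) ≤ (n:ℝ) := by exact_mod_cast hn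
  have hk1 : (1:ℝ) ≤ k := by rw [hk]; linarith
  have hkne : k ≠ 0 := by linarith
  have hkpos : 0 < k := by linarith
  have hb1 : b t₁ ≠ 0 := (hbpos t₁ ht₁).ne'
  have hf1 : f t₁ ≠ 0 := (hfpos t₁ ht₁).ne'
  -- b''(t₁) in terms of α(t₁)
  have hA1 : α t₁ * b t₁ = -(k * deriv (deriv b) t₁) := by
    have := congrFun hα t₁
    rw [this]
    field_simp
  -- f(t₁) b''(t₁) = h b(t₁)
  have hfb2 : f t₁ * deriv (deriv b) t₁ = h * b t₁ := by
    have h1 : f t₁ * (α t₁ * b t₁) = -(k * h) * b t₁ := by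
      have : f t₁ * α t₁ = -(k * h) := by linarith [hval]
      rw [← mul_assoc, this]
    rw [hA1] at h1
    have h2 : (-k) * (f t₁ * deriv (deriv b) t₁) = (-k) * (h * b t₁) := by ring_nf; ring_nf at h1; linarith
    exact mul_left_cancel₀ (neg_ne_zero.mpr hkne) h2
  -- b'(t₁) = 0
  have hb'0 : deriv b t₁ = 0 := by
    have e2 := heq2 t₁ ht₁
    have : deriv f t₁ * deriv b t₁ = 0 := by linarith
    exact (mul_eq_zero.mp this).resolve_left hcrit
  -- Eq A : f'' = α f - h on I
  have EqA : ∀ t ∈ I, deriv (deriv f) t = α t * f t - h := by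
    intro t ht
    have hat := congrFun hα t
    have e1 := heq1 t ht
    rw [hat]
    ring_nf
    ring_nf at e1
    linarith
  -- Eq B : b''' = α b' on I
  have EqB : ∀ t ∈ I, deriv (deriv (deriv b)) t = α t * deriv b t := by
    intro t ht
    have hmem : I ∈ nhds t := hIopen.mem_nhds ht
    have hev : (fun s => f s * deriv (deriv b) s - deriv f s * deriv b s)
        =ᶠ[nhds t] (fun s => h * b s) := by
      filter_upwards [hmem] with s hs using heq2 s hs
    have hL : HasDerivAt (fun s => f s * deriv (deriv b) s - deriv f s * deriv b s)
        (deriv f t * deriv (deriv b) t + f t * deriv (deriv (deriv b)) t -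
          (deriv (deriv f) t * deriv b t + deriv f t * deriv (deriv b) t)) t :=
      ((hf t ht).hasDerivAt.mul (hb'' t ht).hasDerivAt).sub
        ((hf' t ht).hasDerivAt.mul (hb' t ht).hasDerivAt)
    have hR : HasDerivAt (fun s => h * b s) (h * deriv b t) t :=
      (hb t ht).hasDerivAt.const_mul h
    have hL' := hL.congr_of_eventuallyEq hev.symm
    have huniq := hL'.unique hR
    have hAt := EqA t ht
    have key : f t * deriv (deriv (deriv b)) t = f t * (α t * deriv b t) := by
      linear_combination huniq + deriv b t * hAt
    exact mul_left_cancel₀ (hfpos t ht).ne' key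
  -- formula for deriv α on I
  have hDα : ∀ t ∈ I, deriv α t
      = -k * (deriv b t * (α t * b t - deriv (deriv b) t)) / (b t) ^ 2 := by
    intro t ht
    have hbne : b t ≠ 0 := (hbpos t ht).ne'
    have h1 : HasDerivAt (fun s => deriv (deriv b) s / b s)
        ((deriv (deriv (deriv b)) t * b t - deriv (deriv b) t * deriv b t) / (b t) ^ 2) t :=
      (hb'' t ht).hasDerivAt.div (hb t ht).hasDerivAt hbne
    have h2 := h1.const_mul (-k)
    have h3 : HasDerivAt α
        (-k * ((deriv (deriv (deriv b)) t * b t - deriv (deriv b) t * deriv b t) / (b t) ^ 2)) t := by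
      rw [hα]; exact h2
    rw [h3.deriv, EqB t ht]
    ring
  have goal1 : deriv α t₁ = 0 := by
    rw [hDα t₁ ht₁, hb'0]
    simp
  refine ⟨goal1, ?_⟩
  -- deriv (deriv α) t₁ via the eventual formula
  have hmem : I ∈ nhds t₁ := hIopen.mem_nhds ht₁
  have hev2 : deriv α =ᶠ[nhds t₁]
      (fun s => -k * (deriv b s * (α s * b s - deriv (deriv b) s)) / (b s) ^ 2) := by
    filter_upwards [hmem] with s hs using hDα s hs
  rw [hev2.deriv_eq]
  -- compute the derivative of the explicit formula at t₁
  have hN : HasDerivAt (fun s => -k * (deriv b s * (α s * b s - deriv (deriv b) s)))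
      (-k * (deriv (deriv b) t₁ * (α t₁ * b t₁ - deriv (deriv b) t₁) +
        deriv b t₁ * ((deriv α t₁ * b t₁ + α t₁ * deriv b t₁) - deriv (deriv (deriv b)) t₁))) t₁ :=
    (((hb' t₁ ht₁).hasDerivAt.mul
      (((hαdiff t₁ ht₁).hasDerivAt.mul (hb t₁ ht₁).hasDerivAt).sub
        (hb'' t₁ ht₁).hasDerivAt))).const_mul (-k)
  have hD : HasDerivAt (fun s => (b s) ^ 2) ((2 : ℕ) * b t₁ ^ 1 * deriv b t₁) t₁ :=
    (hb t₁ ht₁).hasDerivAt.pow 2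
  have hG := hN.div hD (pow_ne_zero 2 hb1)
  rw [(show HasDerivAt (fun s => -k * (deriv b s * (α s * b s - deriv (deriv b) s)) / b s ^ 2) _ t₁ from hG).deriv]
  rw [hb'0]
  have hb2 : deriv (deriv b) t₁ = -(α t₁ * b t₁) / k := by
    field_simp
    linarith [hA1]
  rw [hb2]
  have hnk : (n : ℝ) = k + 1 := by rw [hk]; ring
  rw [hnk]
  field_simp
  ring
end
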